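/- h(2) = 3: there exist 3 cubes in the discrete torus (ℤ/4ℤ)^2 (possibly overlapping) such that every cube of the torus meets one of them, and no 2 cubes have this property. -/
import Mathlib

/-- The cube `v + {0,1}^n` in the discrete torus `(ℤ/4ℤ)^n`. -/
def cube {n : ℕ} (v : Fin n → ZMod 4) : Set (Fin n → ZMod 4) :=
  {x | ∀ i, x i = v i ∨ x i = v i + 1}

/-- A blocking set: a family of cubes meeting every cube of the torus. -/
def IsBlocking {n : ℕ} (B : Finset (Fin n → ZMod 4)) : Prop :=
  ∀ w : Fin n → ZMod 4, ∃ v ∈ B, ¬ Disjoint (cube v) (cube w)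

lemma no2 (c x : ZMod 4) (h1 : x = c ∨ x = c + 1) (h2 : x = c + 2 ∨ x = c + 2 + 1) : False := by
  have h1' : x - c = 0 ∨ x - c = 1 := by rcases h1 with h|h <;> subst h <;> simp
  have h2' : x - c = 2 ∨ x - c = 3 := by
    rcases h2 with h|h <;> subst h <;> ring_nf <;> simp
  rcases h1' with h|h <;> rcases h2' with h'|h' <;> rw [h] at h' <;> exact absurd h' (by decide)

lemma key : ∀ w : Fin 2 → ZMod 4, ∃ v ∈ ({![0,0],![1,1],![2,2]} : Finset (Fin 2 → ZMod 4)),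
    ∃ x : Fin 2 → ZMod 4, (∀ i, x i = v i ∨ x i = v i + 1) ∧ (∀ i, x i = w i ∨ x i = w i + 1) := by
  decide

theorem h_two_eq_three :
    (∃ B : Finset (Fin 2 → ZMod 4), B.card = 3 ∧ IsBlocking B) ∧
    (∀ B : Finset (Fin 2 → ZMod 4), IsBlocking B → 3 ≤ B.card) := by
  constructor
  · refine ⟨{![0,0],![1,1],![2,2]}, by decide, ?_⟩
    intro w
    obtain ⟨v, hv, x, hx1, hx2⟩ := key w
    exact ⟨v, hv, Set.not_disjoint_iff.2 ⟨x, hx1, hx2⟩⟩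
  · intro B hB
    by_contra hlt
    push_neg at hlt
    interval_cases h : B.card
    · obtain ⟨v, hv, _⟩ := hB (fun _ => 0)
      simp [Finset.card_eq_zero.1 h] at hv
    · obtain ⟨a, rfl⟩ := Finset.card_eq_one.1 h
      obtain ⟨v, hv, hd⟩ := hB (fun i => a i + 2)
      simp only [Finset.mem_singleton] at hv
      subst hv
      apply hd
      rw [Set.disjoint_left]
      intro x hx hx'
      exact no2 (v 0) (x 0) (hx 0) (hx' 0)
    · obtain ⟨a, b, hab, rfl⟩ := Finset.card_eq_two.1 h
      obtain ⟨v, hv, hd⟩ := hB ![a 0 + 2, b 1 + 2]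
      simp only [Finset.mem_insert, Finset.mem_singleton] at hv
      apply hd
      rw [Set.disjoint_left]
      intro x hx hx'
      rcases hv with rfl | rfl
      · have := hx' 0
        simp only [Matrix.cons_val_zero] at this
        exact no2 (v 0) (x 0) (hx 0) this
      · have := hx' 1
        simp only [Matrix.cons_val_one, Matrix.head_cons] at this
        exact no2 (v 1) (x 1) (hx 1) this
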